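/- Let x be a sequence of length m with distinct elements, i ∈ {1,...,m-1}, and y = τ(x,i). Then the Skipped-number tables SN_x and SN_y differ in at most 3 positions, and all differing positions lie in {i, i+1, ref_x(i), ref_x(i+1), ref_y(i), ref_y(i+1)}. -/

import Mathlib

/-- Binary tree shapes (Cartesian trees are determined by their shape). -/
inductive BTree : Type
  | nil : BTree
  | node : BTree → BTree → BTree
deriving DecidableEq

namespace BTree

/-- Number of nodes. -/
def size : BTree → ℕ
  | nil => 0
  | node l r => size l + size r + 1

/-- Length of the leftmost path. -/
def LMP : BTree → ℕ
  | nil => 0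
  | node l _ => LMP l + 1

/-- Length of the rightmost path. -/
def RMP : BTree → ℕ
  | nil => 0
  | node _ r => RMP r + 1

end BTree

/-- Minimum value of a list (0 for the empty list). -/
def listMin : List ℤ → ℤ
  | [] => 0
  | a :: t => t.foldl min a

/-- Index (0-based) of the minimum of a list. -/
def minIdx (l : List ℤ) : ℕ := l.idxOf (listMin l)

/-- Cartesian tree of a list, with fuel for termination. -/
def ctreeAux : ℕ → List ℤ → BTree
  | 0, _ => .nil
  | _ + 1, [] => .nil
  | n + 1, a :: t =>
      let g := minIdx (a :: t)
      .node (ctreeAux n ((a :: t).take g)) (ctreeAux n ((a :: t).drop (g + 1)))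

/-- Cartesian tree of a list: the root is the position of the minimum,
its subtrees are the Cartesian trees of the prefix and suffix around it. -/
def ctreeL (l : List ℤ) : BTree := ctreeAux l.length l

/-- The factor x[a..b] (1-based positions) of a sequence, as a list. -/
def seqList (x : ℕ → ℤ) (a b : ℕ) : List ℤ :=
  (List.range (b + 1 - a)).map (fun k => x (a + k))

/-- Cartesian tree of the sequence x[1..m]. -/
def ctreeOf (m : ℕ) (x : ℕ → ℤ) : BTree := ctreeL (seqList x 1 m)

/-- Positions j < h (1-based) with x[j] < x[h]. -/
def PDset (x : ℕ → ℤ) (h : ℕ) : Finset ℕ :=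
  (Finset.Ico 1 h).filter (fun j => x j < x h)

/-- Parent-distance table: PD_x[h] = h - max{j < h : x[j] < x[h]}, 0 if no such j. -/
def PD (x : ℕ → ℤ) (h : ℕ) : ℕ :=
  if hs : (PDset x h).Nonempty then h - (PDset x h).max' hs else 0

/-- Positions h < j ≤ m with x[j] < x[h]. -/
def RPDset (m : ℕ) (x : ℕ → ℤ) (h : ℕ) : Finset ℕ :=
  (Finset.Ioc h m).filter (fun j => x j < x h)

/-- Reverse parent-distance table: RPD_x[h] = min{j > h : x[j] < x[h]} - h, 0 if no such j. -/
def RPD (m : ℕ) (x : ℕ → ℤ) (h : ℕ) : ℕ :=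
  if hs : (RPDset m x h).Nonempty then (RPDset m x h).min' hs - h else 0

/-- Referent of h: the smallest position j > h with x[j] < x[h], or -1 if none. -/
def refD (m : ℕ) (x : ℕ → ℤ) (h : ℕ) : ℤ :=
  if hs : (RPDset m x h).Nonempty then ((RPDset m x h).min' hs : ℤ) else -1

/-- Skipped-number table: SN_x[h] is the number of nodes on the rightmost path of the
left subtree of node h in C(x), i.e. the number of positions whose referent is h. -/
def SN (m : ℕ) (x : ℕ → ℤ) (h : ℕ) : ℕ :=
  ((Finset.Ico 1 h).filter (fun j => refD m x j = (h : ℤ))).card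

/-- The swap τ(x,i): exchange the entries at positions i and i+1. -/
def swapAt (x : ℕ → ℤ) (i : ℕ) : ℕ → ℤ :=
  fun j => if j = i then x (i + 1) else if j = i + 1 then x i else x j

/-- ng(T,i): the Cartesian trees obtained from a sequence realizing T by one swap
at position i (valid positions are 1 ≤ i ≤ m-1). -/
def ngi (m : ℕ) (T : BTree) (i : ℕ) : Set BTree :=
  { S | 1 ≤ i ∧ i + 1 ≤ m ∧ ∃ x : ℕ → ℤ, Set.InjOn x (Set.Icc 1 m) ∧
        ctreeOf m x = T ∧ S = ctreeOf m (swapAt x i) }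

/-- ng(T): the swap neighbourhood of T. -/
def ng (m : ℕ) (T : BTree) : Set BTree := ⋃ i, ngi m T i

/-- Number of permutations of {1,...,n} whose Cartesian tree is A. -/
noncomputable def permCount (n : ℕ) (A : BTree) : ℕ :=
  Set.ncard { σ : Equiv.Perm (Fin n) |
    ctreeL (List.ofFn (fun k : Fin n => ((σ k : ℕ) : ℤ) + 1)) = A }

/-- Product over all nodes t of A of the size of the subtree rooted at t. -/
def hookProd : BTree → ℕ
  | .nil => 1
  | .node l r => (BTree.node l r).size * hookProd l * hookProd r


section SwapAux

variable {m i : ℕ} {x : ℕ → ℤ}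

lemma swap_self (x : ℕ → ℤ) (i : ℕ) : swapAt x i i = x (i+1) := by simp [swapAt]

lemma swap_succ (x : ℕ → ℤ) (i : ℕ) : swapAt x i (i+1) = x i := by
  simp [swapAt]

lemma swap_other (x : ℕ → ℤ) (i : ℕ) {j : ℕ} (h1 : j ≠ i) (h2 : j ≠ i+1) :
    swapAt x i j = x j := by simp [swapAt, h1, h2]

lemma swap_swap (x : ℕ → ℤ) (i : ℕ) : swapAt (swapAt x i) i = x := by
  funext j
  by_cases h1 : j = i
  · subst h1; rw [swap_self, swap_succ]
  · by_cases h2 : j = i + 1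
    · subst h2; rw [swap_succ, swap_self]
    · rw [swap_other _ _ h1 h2, swap_other _ _ h1 h2]

lemma mem_RPDset {h k : ℕ} : k ∈ RPDset m x h ↔ (h < k ∧ k ≤ m) ∧ x k < x h := by
  simp [RPDset, Finset.mem_filter, Finset.mem_Ioc]

lemma refD_eq_of {h k : ℕ} (hk : k ∈ RPDset m x h)
    (hmin : ∀ j ∈ RPDset m x h, k ≤ j) : refD m x h = (k : ℤ) := by
  have hs : (RPDset m x h).Nonempty := ⟨k, hk⟩
  rw [refD, dif_pos hs]
  norm_cast
  exact le_antisymm (Finset.min'_le _ _ hk) (Finset.le_min' _ hs _ hmin)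

lemma refD_eq_elim {h k : ℕ} (hr : refD m x h = (k : ℤ)) :
    k ∈ RPDset m x h ∧ ∀ j ∈ RPDset m x h, k ≤ j := by
  rw [refD] at hr
  split at hr
  · next hs =>
    have : (RPDset m x h).min' hs = k := by exact_mod_cast hr
    exact this ▸ ⟨Finset.min'_mem _ _, fun j hj => Finset.min'_le _ _ hj⟩
  · exfalso; omega

lemma refD_gt {j : ℕ} (hj : i + 1 < j) :
    refD m (swapAt x i) j = refD m x j := by
  have hset : RPDset m (swapAt x i) j = RPDset m x j := by
    ext k
    rw [mem_RPDset, mem_RPDset]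
    constructor
    · rintro ⟨⟨h1, h2⟩, h3⟩
      rw [swap_other x i (by omega) (by omega), swap_other x i (by omega) (by omega)] at h3
      exact ⟨⟨h1, h2⟩, h3⟩
    · rintro ⟨⟨h1, h2⟩, h3⟩
      rw [← swap_other x i (j := k) (by omega) (by omega),
          ← swap_other x i (j := j) (by omega) (by omega)] at h3
      exact ⟨⟨h1, h2⟩, h3⟩
  rw [refD, refD, hset]

lemma refD_succ (hab : x i < x (i + 1)) :
    refD m (swapAt x i) (i + 1) = refD m x i := by
  have hset : RPDset m (swapAt x i) (i + 1) = RPDset m x i := by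
    ext k
    rw [mem_RPDset, mem_RPDset, swap_succ]
    constructor
    · rintro ⟨⟨h1, h2⟩, h3⟩
      rw [swap_other x i (by omega) (by omega)] at h3
      exact ⟨⟨by omega, h2⟩, h3⟩
    · rintro ⟨⟨h1, h2⟩, h3⟩
      have hk : k ≠ i + 1 := by
        rintro rfl; exact absurd h3 (not_lt.2 hab.le)
      rw [← swap_other x i (j := k) (by omega) hk] at h3
      exact ⟨⟨by omega, h2⟩, h3⟩
  rw [refD, refD, hset]

lemma refD_self (hab : x i < x (i + 1)) (him : i + 1 ≤ m) :
    refD m (swapAt x i) i = ((i + 1 : ℕ) : ℤ) := by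
  apply refD_eq_of
  · rw [mem_RPDset, swap_self, swap_succ]; exact ⟨⟨by omega, him⟩, hab⟩
  · intro j hj
    rw [mem_RPDset] at hj
    omega

lemma refD_flip {j h : ℕ} (him : i + 1 ≤ m) (hji : j < i)
    (hne1 : h ≠ i) (hne2 : h ≠ i + 1) (hr : refD m x j = (h : ℤ)) :
    refD m (swapAt x i) j = (h : ℤ) := by
  obtain ⟨hmem, hmin⟩ := refD_eq_elim hr
  rw [mem_RPDset] at hmem
  obtain ⟨⟨hjh, hhm⟩, hxh⟩ := hmem
  apply refD_eq_of
  · rw [mem_RPDset, swap_other x i hne1 hne2, swap_other x i (by omega) (by omega)]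
    exact ⟨⟨hjh, hhm⟩, hxh⟩
  · intro k hk
    by_contra hkh
    push_neg at hkh
    rw [mem_RPDset, swap_other x i (j := j) (by omega) (by omega)] at hk
    obtain ⟨⟨hjk, hkm⟩, hyk⟩ := hk
    by_cases hk1 : k = i
    · rw [hk1, swap_self] at hyk
      have : i + 1 ∈ RPDset m x j := mem_RPDset.2 ⟨⟨by omega, him⟩, hyk⟩
      have := hmin _ this
      omega
    · by_cases hk2 : k = i + 1
      · subst hk2
        rw [swap_succ] at hyk
        have : i ∈ RPDset m x j := mem_RPDset.2 ⟨⟨hji, by omega⟩, hyk⟩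
        have := hmin _ this
        omega
      · rw [swap_other x i hk1 hk2] at hyk
        have : k ∈ RPDset m x j := mem_RPDset.2 ⟨⟨hjk, hkm⟩, hyk⟩
        have := hmin _ this
        omega

lemma refD_flip_iff {j h : ℕ} (him : i + 1 ≤ m) (hji : j < i)
    (hne1 : h ≠ i) (hne2 : h ≠ i + 1) :
    refD m (swapAt x i) j = (h : ℤ) ↔ refD m x j = (h : ℤ) := by
  constructor
  · intro hr
    have := refD_flip (x := swapAt x i) him hji hne1 hne2 hr
    rwa [swap_swap] at this
  · exact refD_flip him hji hne1 hne2

end SwapAux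

section MainLemma

/-- The transposition i ↔ i+1 on ℕ. -/
def sigmaSwap (i : ℕ) (a : ℕ) : ℕ := if a = i then i + 1 else if a = i + 1 then i else a

lemma sigmaSwap_invol (i a : ℕ) : sigmaSwap i (sigmaSwap i a) = a := by
  unfold sigmaSwap; split_ifs <;> omega

lemma SN_swap_eq (m i : ℕ) (x : ℕ → ℤ) (hi1 : 1 ≤ i) (him : i + 1 ≤ m)
    (hab : x i < x (i + 1)) (h : ℕ) (hne1 : h ≠ i) (hne2 : h ≠ i + 1)
    (hne3 : (h : ℤ) ≠ refD m x (i + 1)) :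
    SN m (swapAt x i) h = SN m x h := by
  unfold SN
  apply Finset.card_nbij' (sigmaSwap i) (sigmaSwap i)
  · -- a in B (for y) → σ a in A (for x)
    intro a ha
    rw [Finset.mem_coe, Finset.mem_filter, Finset.mem_Ico] at ha
    obtain ⟨⟨ha1, hah⟩, har⟩ := ha
    by_cases h1 : a = i
    · exfalso
      rw [h1, refD_self hab him] at har
      exact hne2 (by exact_mod_cast har.symm)
    · by_cases h2 : a = i + 1
      · subst h2
        rw [refD_succ hab] at har
        have hσ : sigmaSwap i (i + 1) = i := by unfold sigmaSwap; split_ifs <;> omega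
        rw [hσ, Finset.mem_coe, Finset.mem_filter, Finset.mem_Ico]
        exact ⟨⟨hi1, by omega⟩, har⟩
      · have hσ : sigmaSwap i a = a := by unfold sigmaSwap; split_ifs <;> omega
        rw [hσ, Finset.mem_coe, Finset.mem_filter, Finset.mem_Ico]
        refine ⟨⟨ha1, hah⟩, ?_⟩
        rcases lt_or_gt_of_ne (fun he : a = i => h1 he) with hlt | hgt
        · exact (refD_flip_iff him hlt hne1 hne2).1 har
        · have hgt' : i + 1 < a := by omega
          rwa [refD_gt hgt'] at har
  · -- a in A (for x) → σ a in B (for y)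
    intro a ha
    rw [Finset.mem_coe, Finset.mem_filter, Finset.mem_Ico] at ha
    obtain ⟨⟨ha1, hah⟩, har⟩ := ha
    by_cases h1 : a = i
    · rw [h1] at har
      have hmem := (refD_eq_elim har).1
      rw [mem_RPDset] at hmem
      have hσ : sigmaSwap i a = i + 1 := by unfold sigmaSwap; rw [if_pos h1]
      rw [hσ, Finset.mem_coe, Finset.mem_filter, Finset.mem_Ico, refD_succ hab]
      exact ⟨⟨by omega, by omega⟩, har⟩
    · by_cases h2 : a = i + 1
      · exfalso
        subst h2
        exact hne3 har.symm
      · have hσ : sigmaSwap i a = a := by unfold sigmaSwap; split_ifs <;> omega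
        rw [hσ, Finset.mem_coe, Finset.mem_filter, Finset.mem_Ico]
        refine ⟨⟨ha1, hah⟩, ?_⟩
        rcases lt_or_gt_of_ne (fun he : a = i => h1 he) with hlt | hgt
        · exact (refD_flip_iff him hlt hne1 hne2).2 har
        · have hgt' : i + 1 < a := by omega
          rwa [refD_gt hgt']
  · intro a _; exact sigmaSwap_invol i a
  · intro a _; exact sigmaSwap_invol i a

end MainLemma

theorem stmt16 (m i : ℕ) (x : ℕ → ℤ) (hx : Set.InjOn x (Set.Icc 1 m))
    (hi1 : 1 ≤ i) (him : i + 1 ≤ m) :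
    ((Finset.Icc 1 m).filter (fun j => SN m (swapAt x i) j ≠ SN m x j)).card ≤ 3 ∧
    ∀ j ∈ (Finset.Icc 1 m).filter (fun j => SN m (swapAt x i) j ≠ SN m x j),
      j = i ∨ j = i + 1 ∨ (j : ℤ) = refD m x i ∨ (j : ℤ) = refD m x (i + 1) ∨
      (j : ℤ) = refD m (swapAt x i) i ∨ (j : ℤ) = refD m (swapAt x i) (i + 1) := by
  have hxne : x i ≠ x (i + 1) := by
    intro he
    have := hx (Set.mem_Icc.2 ⟨hi1, by omega⟩) (Set.mem_Icc.2 ⟨by omega, him⟩) he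
    omega
  have key : ∃ c : ℤ, (c = refD m x (i + 1) ∨ c = refD m (swapAt x i) (i + 1)) ∧
      ∀ j ∈ (Finset.Icc 1 m).filter (fun j => SN m (swapAt x i) j ≠ SN m x j),
        j = i ∨ j = i + 1 ∨ (j : ℤ) = c := by
    rcases lt_or_gt_of_ne hxne with hab | hba
    · refine ⟨refD m x (i + 1), Or.inl rfl, ?_⟩
      intro j hj
      rw [Finset.mem_filter] at hj
      by_contra hcon
      push_neg at hcon
      exact hj.2 (SN_swap_eq m i x hi1 him hab j hcon.1 hcon.2.1 hcon.2.2)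
    · refine ⟨refD m (swapAt x i) (i + 1), Or.inr rfl, ?_⟩
      intro j hj
      rw [Finset.mem_filter] at hj
      by_contra hcon
      push_neg at hcon
      have hab' : (swapAt x i) i < (swapAt x i) (i + 1) := by
        rw [swap_self, swap_succ]; exact hba
      have heq := SN_swap_eq m i (swapAt x i) hi1 him hab' j hcon.1 hcon.2.1 hcon.2.2
      rw [swap_swap] at heq
      exact hj.2 heq.symm
  obtain ⟨c, hc, key⟩ := key
  constructor
  · have hsub : (Finset.Icc 1 m).filter (fun j => SN m (swapAt x i) j ≠ SN m x j) ⊆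
        insert i (insert (i + 1) ((Finset.Icc 1 m).filter (fun j : ℕ => (j : ℤ) = c))) := by
      intro j hj
      rcases key j hj with h | h | h
      · simp [h]
      · simp [h]
      · simp only [Finset.mem_insert, Finset.mem_filter]
        exact Or.inr (Or.inr ⟨(Finset.mem_filter.1 hj).1, h⟩)
    have hT : ((Finset.Icc 1 m).filter (fun j : ℕ => (j : ℤ) = c)).card ≤ 1 := by
      apply Finset.card_le_one.2
      intro a ha b hb
      rw [Finset.mem_filter] at ha hb
      exact_mod_cast ha.2.trans hb.2.symm
    have h1 := Finset.card_le_card hsub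
    have h2 := Finset.card_insert_le i
      (insert (i + 1) ((Finset.Icc 1 m).filter (fun j : ℕ => (j : ℤ) = c)))
    have h3 := Finset.card_insert_le (i + 1)
      ((Finset.Icc 1 m).filter (fun j : ℕ => (j : ℤ) = c))
    omega
  · intro j hj
    rcases key j hj with h | h | h
    · exact Or.inl h
    · exact Or.inr (Or.inl h)
    · rcases hc with rfl | rfl
      · exact Or.inr (Or.inr (Or.inr (Or.inl h)))
      · exact Or.inr (Or.inr (Or.inr (Or.inr (Or.inr h))))
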